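/- The factor 2/√3 in the disk-enlargement theorem is tight: let c₁, c₂, c₃ ∈ ℝ² be the vertices of an equilateral triangle of side length 2. Then the three closed unit disks closedBall(cᵢ, 1) pairwise intersect, yet for every real λ with 0 ≤ λ < 2/√3, the intersection closedBall(c₁, λ) ∩ closedBall(c₂, λ) ∩ closedBall(c₃, λ) is empty. -/

import Mathlib

noncomputable section

/-- The Euclidean plane. -/
abbrev Pt : Type := EuclideanSpace ℝ (Fin 2)

theorem enlargement_factor_tight (c₁ c₂ c₃ : Pt)
    (h12 : dist c₁ c₂ = 2) (h13 : dist c₁ c₃ = 2) (h23 : dist c₂ c₃ = 2) :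
    ((Metric.closedBall c₁ 1 ∩ Metric.closedBall c₂ 1).Nonempty ∧
     (Metric.closedBall c₁ 1 ∩ Metric.closedBall c₃ 1).Nonempty ∧
     (Metric.closedBall c₂ 1 ∩ Metric.closedBall c₃ 1).Nonempty) ∧
    ∀ lam : ℝ, 0 ≤ lam → lam < 2 / Real.sqrt 3 →
      Metric.closedBall c₁ lam ∩ Metric.closedBall c₂ lam ∩ Metric.closedBall c₃ lam = ∅ := by
  constructor
  · refine ⟨⟨midpoint ℝ c₁ c₂, ?_, ?_⟩, ⟨midpoint ℝ c₁ c₃, ?_, ?_⟩,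
      ⟨midpoint ℝ c₂ c₃, ?_, ?_⟩⟩ <;>
    simp [Metric.mem_closedBall, dist_midpoint_left, dist_midpoint_right, h12, h13, h23]
  · intro lam hlam0 hlam
    rw [Set.eq_empty_iff_forall_notMem]
    rintro x ⟨⟨hx1, hx2⟩, hx3⟩
    simp only [Metric.mem_closedBall] at hx1 hx2 hx3
    -- key inequality: sum of squared side lengths ≤ 3 * sum of squared distances to x
    set u : Pt := x - c₁ with hu
    set v : Pt := x - c₂ with hv
    set w : Pt := x - c₃ with hw
    have e12 : dist c₁ c₂ = ‖u - v‖ := by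
      rw [dist_eq_norm']; congr 1; simp only [hu, hv]; abel
    have e13 : dist c₁ c₃ = ‖u - w‖ := by
      rw [dist_eq_norm']; congr 1; simp only [hu, hw]; abel
    have e23 : dist c₂ c₃ = ‖v - w‖ := by
      rw [dist_eq_norm']; congr 1; simp only [hv, hw]; abel
    have d1 : dist x c₁ = ‖u‖ := dist_eq_norm x c₁
    have d2 : dist x c₂ = ‖v‖ := dist_eq_norm x c₂
    have d3 : dist x c₃ = ‖w‖ := dist_eq_norm x c₃
    have s12 : ‖u - v‖ ^ 2 = ‖u‖ ^ 2 - 2 * inner ℝ u v + ‖v‖ ^ 2 := norm_sub_sq_real u v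
    have s13 : ‖u - w‖ ^ 2 = ‖u‖ ^ 2 - 2 * inner ℝ u w + ‖w‖ ^ 2 := norm_sub_sq_real u w
    have s23 : ‖v - w‖ ^ 2 = ‖v‖ ^ 2 - 2 * inner ℝ v w + ‖w‖ ^ 2 := norm_sub_sq_real v w
    have hsum : (0:ℝ) ≤ ‖u + v + w‖ ^ 2 := sq_nonneg _
    have hexp : ‖u + v + w‖ ^ 2 = ‖u‖^2 + ‖v‖^2 + ‖w‖^2 +
        2 * inner ℝ u v + 2 * inner ℝ u w + 2 * inner ℝ v w := by
      rw [norm_add_sq_real, norm_add_sq_real, inner_add_left]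
      ring
    have key : dist c₁ c₂ ^ 2 + dist c₁ c₃ ^ 2 + dist c₂ c₃ ^ 2 ≤
        3 * (dist x c₁ ^ 2 + dist x c₂ ^ 2 + dist x c₃ ^ 2) := by
      rw [e12, e13, e23, d1, d2, d3, s12, s13, s23]
      rw [hexp] at hsum
      linarith
    rw [h12, h13, h23] at key
    have hd1 : dist x c₁ ^ 2 ≤ lam ^ 2 := pow_le_pow_left₀ dist_nonneg hx1 2
    have hd2 : dist x c₂ ^ 2 ≤ lam ^ 2 := pow_le_pow_left₀ dist_nonneg hx2 2
    have hd3 : dist x c₃ ^ 2 ≤ lam ^ 2 := pow_le_pow_left₀ dist_nonneg hx3 2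
    have h4 : (4:ℝ) ≤ 3 * lam ^ 2 := by nlinarith
    have hlam2 : lam ^ 2 < (2 / Real.sqrt 3) ^ 2 := pow_lt_pow_left₀ hlam hlam0 two_ne_zero
    have hval : (2 / Real.sqrt 3) ^ 2 = 4 / 3 := by
      rw [div_pow, Real.sq_sqrt (by norm_num : (0:ℝ) ≤ 3)]; norm_num
    rw [hval] at hlam2
    linarith
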